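/- For every function f : E → ℝ on a finite-dimensional real normed vector space that is locally bounded below by positive constants (every point has a neighbourhood on which f is bounded below by some positive constant), there exists a smooth (C^∞) positive function g : E → ℝ with g(x) ≤ f(x) for all x. -/

import Mathlib

open scoped ContDiff Manifold

/-- A function locally bounded below by positive constants is globally bounded below
by a smooth positive function. -/
theorem exists_smooth_pos_le {E : Type*} [NormedAddCommGroup E] [NormedSpace ℝ E]
    [FiniteDimensional ℝ E] (f : E → ℝ)
    (hf : ∀ x₀ : E, ∃ U ∈ nhds x₀, ∃ ε > (0 : ℝ), ∀ x ∈ U, ε ≤ f x) :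
    ∃ g : E → ℝ, ContDiff ℝ ∞ g ∧ (∀ x, 0 < g x) ∧ ∀ x, g x ≤ f x := by
  obtain ⟨g, hg⟩ := exists_contMDiffMap_forall_mem_convex_of_local_const 𝓘(ℝ, E) (n := (⊤ : ℕ∞))
    (t := fun x => Set.Ioc 0 (f x)) (fun x => (convex_Ioc _ _))
    (fun x₀ => by
      obtain ⟨U, hU, ε, hε, hεf⟩ := hf x₀
      exact ⟨ε, Filter.eventually_of_mem hU fun y hy => ⟨hε, hεf y hy⟩⟩)
  exact ⟨g, (contMDiff_iff_contDiff.mp g.2 : ), fun x => (hg x).1, fun x => (hg x).2⟩
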